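/- Let q : K → H and p : H → G be surjective group homomorphisms. Suppose that the descending series of ker p in H (defined by N⁽¹⁾ = ker p, N⁽ᵐ⁺¹⁾ = ⁅H, N⁽ᵐ⁾⁆) is trivial at step k, and that the corresponding series of ker q in K is trivial at step l. Then the series of ker(p ∘ q) in K is trivial at step k + l. In particular the composite of two surjective group homomorphisms whose kernels are 'nilpotently embedded' (some iterated commutator with the ambient group vanishes) again has a nilpotently embedded kernel. (Instance of Lemma 1.9(1) in the category of groups with shrinking functor s(G, N) = [G, N].) -/

import Mathlib

/-- The descending series of a normal subgroup `N` of `W`: `N⁽¹⁾ = N`,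
`N⁽ᵐ⁺¹⁾ = ⁅W, N⁽ᵐ⁾⁆`.  (The value at `0` is set to `⊤` and is irrelevant.) -/
def descSeries {W : Type*} [Group W] (N : Subgroup W) : ℕ → Subgroup W
  | 0 => ⊤
  | 1 => N
  | (m + 2) => ⁅(⊤ : Subgroup W), descSeries N (m + 1)⁆

lemma descSeries_succ {W : Type*} [Group W] (N : Subgroup W) (m : ℕ) (hm : 1 ≤ m) :
    descSeries N (m + 1) = ⁅(⊤ : Subgroup W), descSeries N m⁆ := by
  obtain ⟨j, rfl⟩ := Nat.exists_eq_add_of_le hm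
  rw [Nat.add_comm 1 j]
  rfl

lemma descSeries_mono {W : Type*} [Group W] {N M : Subgroup W} (h : N ≤ M) (m : ℕ) :
    descSeries N m ≤ descSeries M m := by
  induction m with
  | zero => exact le_rfl
  | succ n ih =>
    match n, ih with
    | 0, _ => exact h
    | (j + 1), ih => exact Subgroup.commutator_mono le_rfl ih

lemma descSeries_normal {W : Type*} [Group W] (N : Subgroup W) [hN : N.Normal] (m : ℕ) :
    (descSeries N m).Normal := by
  induction m with
  | zero => show (⊤ : Subgroup W).Normal; infer_instance
  | succ n ih =>
    match n, ih with
    | 0, _ => exact hN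
    | (j + 1), ih => exact @Subgroup.commutator_normal _ _ ⊤ _ inferInstance ih

lemma descSeries_antitone_succ {W : Type*} [Group W] (N : Subgroup W) [N.Normal]
    (m : ℕ) (hm : 1 ≤ m) : descSeries N (m + 1) ≤ descSeries N m := by
  rw [descSeries_succ N m hm]
  have := descSeries_normal N m
  exact Subgroup.commutator_le_right _ _

lemma descSeries_add {W : Type*} [Group W] (N : Subgroup W) (a b : ℕ) (ha : 1 ≤ a) :
    descSeries N (a + b) = descSeries (descSeries N a) (b + 1) := by
  induction b with
  | zero => rfl
  | succ c ih =>
    rw [← Nat.add_assoc, descSeries_succ N (a + c) (le_trans ha (Nat.le_add_right a c)), ih,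
      descSeries_succ (descSeries N a) (c + 1) (Nat.le_add_left 1 c)]

lemma descSeries_comp_le {K H G : Type*} [Group K] [Group H] [Group G]
    (q : K →* H) (p : H →* G) (hq : Function.Surjective q) (m : ℕ) (hm : 1 ≤ m) :
    descSeries (p.comp q).ker m ≤ (descSeries p.ker m).comap q := by
  induction m with
  | zero => omega
  | succ n ih =>
    match n, ih with
    | 0, _ =>
      intro x hx
      simpa [descSeries, Subgroup.mem_comap, MonoidHom.mem_ker] using hx
    | (j + 1), ih =>
      rw [← Subgroup.map_le_iff_le_comap]
      show Subgroup.map q ⁅(⊤ : Subgroup K), descSeries (p.comp q).ker (j + 1)⁆ ≤ _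
      rw [Subgroup.map_commutator]
      refine le_trans (Subgroup.commutator_mono le_top ?_) le_rfl
      calc Subgroup.map q (descSeries (p.comp q).ker (j + 1))
          ≤ Subgroup.map q ((descSeries p.ker (j + 1)).comap q) :=
            Subgroup.map_mono (ih (Nat.le_add_left 1 j))
        _ = descSeries p.ker (j + 1) := Subgroup.map_comap_eq_self_of_surjective hq _

/-- If `q : K → H` and `p : H → G` are surjective group homomorphisms, the
series of `ker p` in `H` is trivial at step `k` and the series of `ker q` in `K` is trivial at
step `l`, then the series of `ker (p ∘ q)` in `K` is trivial at step `k + l`. -/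
theorem descSeries_ker_comp_trivial {K H G : Type*} [Group K] [Group H] [Group G]
    (q : K →* H) (p : H →* G) (hq : Function.Surjective q) (hp : Function.Surjective p)
    (k l : ℕ) (hk : 1 ≤ k) (hl : 1 ≤ l)
    (hpk : descSeries p.ker k = ⊥) (hql : descSeries q.ker l = ⊥) :
    descSeries (p.comp q).ker (k + l) = ⊥ := by
  have h1 : descSeries (p.comp q).ker k ≤ q.ker := by
    have := descSeries_comp_le q p hq k hk
    rw [hpk] at this; exact this
  rw [descSeries_add _ k l hk]
  have h2 : descSeries (descSeries (p.comp q).ker k) (l + 1) ≤ descSeries q.ker (l + 1) :=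
    descSeries_mono h1 (l + 1)
  have h3 : descSeries q.ker (l + 1) ≤ descSeries q.ker l :=
    descSeries_antitone_succ q.ker l hl
  rw [hql] at h3
  exact le_bot_iff.mp (le_trans h2 h3)
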